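/- For the set C = {x ∈ ℝ² | 0 ≤ x₁ ≤ 1, x₁² ≤ x₂ ≤ x₁}, the end set es(C) is not closed. -/

import Mathlib

open Set Metric Filter
open scoped RealInnerProductSpace

/-- The set C = {x ∈ ℝ² | 0 ≤ x₁ ≤ 1, x₁² ≤ x₂ ≤ x₁}. -/
def Cex : Set (EuclideanSpace ℝ (Fin 2)) :=
  {p | 0 ≤ p 0 ∧ p 0 ≤ 1 ∧ (p 0) ^ 2 ≤ p 1 ∧ p 1 ≤ p 0}

noncomputable def ptex (a : ℝ) : EuclideanSpace ℝ (Fin 2) :=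
  a • EuclideanSpace.single 0 (1:ℝ) + a ^ 2 • EuclideanSpace.single 1 (1:ℝ)

lemma ptex_apply0 (a : ℝ) : ptex a 0 = a := by
  simp [ptex, EuclideanSpace.single_apply]

lemma ptex_apply1 (a : ℝ) : ptex a 1 = a ^ 2 := by
  simp [ptex, EuclideanSpace.single_apply]

lemma ptex_cont : Continuous ptex := by
  unfold ptex; fun_prop

lemma ptex_zero : ptex 0 = 0 := by
  simp [ptex]

lemma Cex_closed : IsClosed Cex := by
  have h0 : Continuous fun p : EuclideanSpace ℝ (Fin 2) => p 0 := (EuclideanSpace.proj (0 : Fin 2)).continuous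
  have h1 : Continuous fun p : EuclideanSpace ℝ (Fin 2) => p 1 := (EuclideanSpace.proj (1 : Fin 2)).continuous
  have : Cex = {p : EuclideanSpace ℝ (Fin 2) | 0 ≤ p 0} ∩ ({p | p 0 ≤ 1} ∩
      ({p | (p 0) ^ 2 ≤ p 1} ∩ {p | p 1 ≤ p 0})) := by
    ext p; simp only [Cex, mem_setOf_eq, mem_inter_iff]
  rw [this]
  exact (isClosed_le continuous_const h0).inter ((isClosed_le h0 continuous_const).inter
    ((isClosed_le (h0.pow 2) h1).inter (isClosed_le h1 h0)))

/-- The end set of Cex is not closed. -/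
theorem end_set_not_closed_example :
    ¬ IsClosed {x ∈ closure Cex | ∀ t : ℝ, 1 < t → t • x ∉ closure Cex} := by
  intro hS
  set S := {x ∈ closure Cex | ∀ t : ℝ, 1 < t → t • x ∉ closure Cex} with hSdef
  have hcl : closure Cex = Cex := Cex_closed.closure_eq
  have hzeroC : (0 : EuclideanSpace ℝ (Fin 2)) ∈ Cex := by
    constructor <;> simp
  -- points on the parabola with 0 < a ≤ 1 are in S
  have hmem : ∀ a : ℝ, 0 < a → a ≤ 1 → ptex a ∈ S := by
    intro a ha ha1
    constructor
    · rw [hcl]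
      refine ⟨?_, ?_, ?_, ?_⟩
      · rw [ptex_apply0]; exact ha.le
      · rw [ptex_apply0]; exact ha1
      · rw [ptex_apply0, ptex_apply1]
      · rw [ptex_apply0, ptex_apply1]; nlinarith
    · intro t ht hmem
      rw [hcl] at hmem
      obtain ⟨h1, h2, h3, h4⟩ := hmem
      have e0 : (t • ptex a) 0 = t * a := by
        simp [PiLp.smul_apply, ptex_apply0, smul_eq_mul]
      have e1 : (t • ptex a) 1 = t * a ^ 2 := by
        simp [PiLp.smul_apply, ptex_apply1, smul_eq_mul]
      rw [e0] at h3
      rw [e1] at h3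
      nlinarith [mul_pos ha ha, mul_pos (mul_pos (sub_pos.mpr ht) (lt_trans one_pos ht)) (mul_pos ha ha)]
  -- 0 is in the closure of S
  have htend : Tendsto (fun n : ℕ => ptex (1 / (n + 1))) atTop (nhds 0) := by
    have h1 : Tendsto (fun n : ℕ => (1 : ℝ) / (n + 1)) atTop (nhds 0) :=
      tendsto_one_div_add_atTop_nhds_zero_nat
    have := (ptex_cont.tendsto 0).comp h1
    rwa [ptex_zero] at this
  have hmemS : ∀ n : ℕ, ptex (1 / (n + 1)) ∈ S := by
    intro n
    apply hmem
    · positivity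
    · rw [div_le_one (by positivity)]
      linarith [Nat.cast_nonneg (α := ℝ) n]
  have h0S : (0 : EuclideanSpace ℝ (Fin 2)) ∈ S := by
    have := mem_closure_of_tendsto htend (Eventually.of_forall hmemS)
    rwa [hS.closure_eq] at this
  -- contradiction: 2 • 0 = 0 ∈ closure Cex
  have := h0S.2 2 (by norm_num)
  apply this
  rw [smul_zero, hcl]
  exact hzeroC
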